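/- Let μ > 0, 0 < d < 1/2, r ∈ ℝ, and consider minimizing h(w, z) = (1/2)(w − r)² + μz + d(w²/z − w²) over w ∈ ℝ, z ∈ [0,1] (with conventions 0²/0 = 0 and w²/0 = +∞ for w ≠ 0). Define z*(r) = 0 if |r| ≤ 2√(μd); z*(r) = (|r|√(d/μ) − 2d)/(1 − 2d) if 2√(μd) ≤ |r| ≤ √(μ/d); and z*(r) = 1 if |r| ≥ √(μ/d); and define w*(r) = 0 if |r| ≤ 2√(μd); w*(r) = sign(r)·√(μ/d)·z*(r) if 2√(μd) ≤ |r| ≤ √(μ/d); and w*(r) = r if |r| ≥ √(μ/d). Then (w*(r), z*(r)) attains the minimum of h over ℝ × [0,1], and h(w*(r), z*(r)) = φ̄(r; d). -/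

import Mathlib

set_option maxHeartbeats 1000000

/-- The perspective-relaxation loss φ̄(r; d) for parameters μ > 0, d ∈ (0,1/2). -/
noncomputable def phiBar (mu d r : ℝ) : ℝ :=
  if |r| ≤ 2 * Real.sqrt (mu * d) then (1/2) * r^2
  else if |r| < Real.sqrt (mu / d) then
    (-(d * r^2) + 2 * Real.sqrt (mu * d) * |r| - 2 * mu * d) / (1 - 2*d)
  else mu

/-- The objective h(w,z) = (1/2)(w−r)² + μz + d(w²/z − w²), EReal-valued,
with the conventions h(0,0) = (1/2)r² and h(w,0) = +∞ for w ≠ 0. -/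
noncomputable def hObj (mu d r w z : ℝ) : EReal :=
  if z = 0 then (if w = 0 then (((1/2) * (w - r)^2 : ℝ) : EReal) else ⊤)
  else (((1/2) * (w - r)^2 + mu * z + d * (w^2 / z - w^2) : ℝ) : EReal)

/-- The optimal z*(r). -/
noncomputable def zstar (mu d r : ℝ) : ℝ :=
  if |r| ≤ 2 * Real.sqrt (mu * d) then 0
  else if |r| ≤ Real.sqrt (mu / d) then
    (|r| * Real.sqrt (d / mu) - 2*d) / (1 - 2*d)
  else 1

/-- The optimal w*(r). -/
noncomputable def wstar (mu d r : ℝ) : ℝ :=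
  if |r| ≤ 2 * Real.sqrt (mu * d) then 0
  else if |r| ≤ Real.sqrt (mu / d) then
    Real.sign r * Real.sqrt (mu / d) * zstar mu d r
  else r

private lemma case1_ineq (mu d r w z : ℝ) (hmu : 0 < mu) (hd0 : 0 < d) (hd : d < 1/2)
    (hz : 0 < z) (hz1 : z ≤ 1) (hr2 : r^2 ≤ 4*(mu*d)) :
    (r^2/2)*z ≤ (1/2)*(w-r)^2*z + mu*z^2 + d*w^2*(1-z) := by
  have hid : (2*(z*(1-2*d)+2*d))*((1/2)*(w-r)^2*z + mu*z^2 + d*w^2*(1-z) - (r^2/2)*z)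
      = ((z*(1-2*d)+2*d)*w - z*r)^2
        + 2*z^2*(mu*(z*(1-2*d)+2*d) - r^2/2) := by ring
  have ht0 : (0:ℝ) < 2*(z*(1-2*d)+2*d) := by nlinarith
  have hmt : 0 ≤ mu*(z*(1-2*d)+2*d) - r^2/2 := by
    nlinarith [mul_nonneg (mul_nonneg hmu.le hz.le) (by linarith : (0:ℝ) ≤ 1-2*d)]
  have h2 : 0 ≤ (2*(z*(1-2*d)+2*d))*((1/2)*(w-r)^2*z + mu*z^2 + d*w^2*(1-z) - (r^2/2)*z) := by
    rw [hid]
    have := sq_nonneg ((z*(1-2*d)+2*d)*w - z*r)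
    nlinarith [mul_nonneg (sq_nonneg z) hmt]
  have := (mul_nonneg_iff_of_pos_left ht0).mp h2
  linarith

private lemma case2_ineq (mu d s q r w z : ℝ) (hmu : 0 < mu) (hd0 : 0 < d) (hd : d < 1/2)
    (hz : 0 < z) (hz1 : z ≤ 1) (hs : s^2 = mu*d) (hq : q^2 = r^2) :
    (2*s*q - 2*s^2 - d*q^2)*z ≤ ((1/2)*(w-r)^2*z + mu*z^2 + d*w^2*(1-z))*(1-2*d) := by
  have hid : (2*(z*(1-2*d)+2*d)*mu)*(((1/2)*(w-r)^2*z + mu*z^2 + d*w^2*(1-z))*(1-2*d)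
        - (2*s*q - 2*s^2 - d*q^2)*z)
      = mu*(1-2*d)*((z*(1-2*d)+2*d)*w - z*r)^2
        + 2*z*(mu*(z*(1-2*d)+2*d) - s*q)^2 := by
    linear_combination (4*mu*(z*(1-2*d)+2*d)*z - 2*z*q^2) * hs
      + (2*mu*d*z*((z*(1-2*d)+2*d)-1)) * hq
  have ht0 : (0:ℝ) < 2*(z*(1-2*d)+2*d)*mu := by nlinarith
  have h2 : 0 ≤ (2*(z*(1-2*d)+2*d)*mu)*(((1/2)*(w-r)^2*z + mu*z^2 + d*w^2*(1-z))*(1-2*d)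
        - (2*s*q - 2*s^2 - d*q^2)*z) := by
    rw [hid]
    have h12 : (0:ℝ) ≤ 1-2*d := by linarith
    nlinarith [mul_nonneg (mul_nonneg hmu.le h12) (sq_nonneg ((z*(1-2*d)+2*d)*w - z*r)),
      mul_nonneg hz.le (sq_nonneg (mu*(z*(1-2*d)+2*d) - s*q))]
  have := (mul_nonneg_iff_of_pos_left ht0).mp h2
  linarith

private lemma case3_ineq (mu d r w z : ℝ) (hmu : 0 < mu) (hd0 : 0 < d) (hd : d < 1/2)
    (hz : 0 < z) (hz1 : z ≤ 1) (hdr : mu ≤ d*r^2) :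
    mu*z ≤ (1/2)*(w-r)^2*z + mu*z^2 + d*w^2*(1-z) := by
  have hid : (2*(z*(1-2*d)+2*d)*(1-2*d))*((1/2)*(w-r)^2*z + mu*z^2 + d*w^2*(1-z) - mu*z)
      = (1-2*d)*((z*(1-2*d)+2*d)*w - z*r)^2
        + 2*z*(1-(z*(1-2*d)+2*d))*(d*r^2 - mu*(z*(1-2*d)+2*d)) := by ring
  have ht0 : (0:ℝ) < 2*(z*(1-2*d)+2*d)*(1-2*d) := by
    have hA : (0:ℝ) < z*(1-2*d)+2*d := by nlinarith
    have hB : (0:ℝ) < 1-2*d := by linarith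
    nlinarith [mul_pos hA hB]
  have h2 : 0 ≤ (2*(z*(1-2*d)+2*d)*(1-2*d))*((1/2)*(w-r)^2*z + mu*z^2 + d*w^2*(1-z) - mu*z) := by
    rw [hid]
    have hfac : 0 ≤ 2*z*(1-(z*(1-2*d)+2*d))*(d*r^2 - mu*(z*(1-2*d)+2*d)) := by
      have hA : 0 ≤ d*r^2 - mu*(z*(1-2*d)+2*d) := by
        have ht1 : mu*(z*(1-2*d)+2*d) ≤ mu := by
          nlinarith [mul_nonneg (mul_nonneg hmu.le (by linarith : (0:ℝ) ≤ 1-z))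
            (by linarith : (0:ℝ) ≤ 1-2*d)]
        linarith
      have hB : 0 ≤ 1-(z*(1-2*d)+2*d) := by nlinarith
      positivity
    nlinarith [mul_nonneg (by linarith : (0:ℝ) ≤ 1-2*d)
      (sq_nonneg ((z*(1-2*d)+2*d)*w - z*r))]
  have := (mul_nonneg_iff_of_pos_left ht0).mp h2
  linarith

private lemma lb_pos (mu d r : ℝ) (hmu : 0 < mu) (hd0 : 0 < d) (hd : d < 1/2)
    (w z : ℝ) (hz : 0 < z) (hz1 : z ≤ 1) :
    phiBar mu d r ≤ (1/2)*(w-r)^2 + mu*z + d*(w^2/z - w^2) := by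
  have hzne : z ≠ 0 := hz.ne'
  have hrhs : (1/2)*(w-r)^2 + mu*z + d*(w^2/z - w^2)
      = ((1/2)*(w-r)^2*z + mu*z^2 + d*w^2*(1-z))/z := by
    field_simp
  rw [hrhs, le_div_iff₀ hz]
  have hs : (Real.sqrt (mu*d))^2 = mu*d := Real.sq_sqrt (by positivity)
  have hs0 : 0 ≤ Real.sqrt (mu*d) := Real.sqrt_nonneg _
  have hq : |r|^2 = r^2 := sq_abs r
  have hq0 : 0 ≤ |r| := abs_nonneg r
  unfold phiBar
  split_ifs with h1 h2
  · have hr2 : r^2 ≤ 4*(mu*d) := by nlinarith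
    have := case1_ineq mu d r w z hmu hd0 hd hz hz1 hr2
    linarith
  · have h12 : (0:ℝ) < 1-2*d := by linarith
    rw [div_mul_eq_mul_div, div_le_iff₀ h12]
    have h5 := case2_ineq mu d (Real.sqrt (mu*d)) (|r|) r w z hmu hd0 hd hz hz1 hs hq
    rw [hs, hq] at h5
    linarith
  · have hge : Real.sqrt (mu/d) ≤ |r| := le_of_not_gt h2
    have hsq : Real.sqrt (mu/d) ^ 2 = mu/d := Real.sq_sqrt (by positivity)
    have h0 : 0 ≤ Real.sqrt (mu/d) := Real.sqrt_nonneg _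
    have hdr : mu ≤ d*r^2 := by
      have h3 : mu/d ≤ |r|^2 := by nlinarith
      rw [hq] at h3
      have := mul_le_mul_of_nonneg_left h3 hd0.le
      rwa [mul_div_cancel₀ _ hd0.ne'] at this
    have := case3_ineq mu d r w z hmu hd0 hd hz hz1 hdr
    linarith

private lemma lb_zero (mu d r : ℝ) (hmu : 0 < mu) (hd0 : 0 < d) (hd : d < 1/2) :
    phiBar mu d r ≤ (1/2)*(0-r)^2 := by
  have hs : (Real.sqrt (mu*d))^2 = mu*d := Real.sq_sqrt (by positivity)
  have hs0 : 0 ≤ Real.sqrt (mu*d) := Real.sqrt_nonneg _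
  have hq : |r|^2 = r^2 := sq_abs r
  have hq0 : 0 ≤ |r| := abs_nonneg r
  unfold phiBar
  split_ifs with h1 h2
  · nlinarith
  · have h12 : (0:ℝ) < 1-2*d := by linarith
    rw [div_le_iff₀ h12]
    nlinarith [sq_nonneg (|r| - 2*Real.sqrt (mu*d))]
  · have hge : Real.sqrt (mu/d) ≤ |r| := le_of_not_gt h2
    have hsq : Real.sqrt (mu/d) ^ 2 = mu/d := Real.sq_sqrt (by positivity)
    have h0 : 0 ≤ Real.sqrt (mu/d) := Real.sqrt_nonneg _
    have hdr : mu ≤ d*r^2 := by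
      have h3 : mu/d ≤ |r|^2 := by nlinarith
      rw [hq] at h3
      have := mul_le_mul_of_nonneg_left h3 hd0.le
      rwa [mul_div_cancel₀ _ hd0.ne'] at this
    nlinarith

private lemma sgn_mul_abs (r : ℝ) : Real.sign r * |r| = r := by
  rcases lt_trichotomy r 0 with h|h|h
  · rw [Real.sign_of_neg h, abs_of_neg h]; ring
  · simp [h]
  · rw [Real.sign_of_pos h, abs_of_pos h]; ring

private lemma sign_sq (r : ℝ) (hr : r ≠ 0) : (Real.sign r)^2 = 1 := by
  rcases lt_or_gt_of_ne hr with h | h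
  · rw [Real.sign_of_neg h]; norm_num
  · rw [Real.sign_of_pos h]; norm_num

private lemma sqrt_mudiv (mu d : ℝ) (hmu : 0 < mu) (hd0 : 0 < d) :
    Real.sqrt (mu / d) = Real.sqrt (mu * d) / d := by
  rw [show mu / d = (Real.sqrt (mu*d)/d)^2 by
        rw [div_pow, Real.sq_sqrt (by positivity)]; field_simp,
      Real.sqrt_sq (by positivity)]

private lemma sqrt_dmu (mu d : ℝ) (hmu : 0 < mu) (hd0 : 0 < d) :
    Real.sqrt (d / mu) = d / Real.sqrt (mu * d) := by
  have hs0 : 0 < Real.sqrt (mu*d) := Real.sqrt_pos.2 (by positivity)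
  rw [show d / mu = (d/Real.sqrt (mu*d))^2 by
        rw [div_pow, Real.sq_sqrt (by positivity)]; field_simp,
      Real.sqrt_sq (by positivity)]

private lemma midval (mu d s q Z : ℝ) (hmu : 0 < mu) (hd0 : 0 < d) (hd : d < 1/2)
    (hs : s^2 = mu*d) (hs0 : 0 < s)
    (hZ : Z = (q*(d/s) - 2*d)/(1-2*d)) (hZ0 : Z ≠ 0) :
    (1/2)*((s/d)*Z - q)^2 + mu*Z + d*(((s/d)*Z)^2/Z - ((s/d)*Z)^2)
      = (-(d*q^2) + 2*s*q - 2*mu*d)/(1-2*d) := by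
  have h12 : (1:ℝ)-2*d ≠ 0 := by intro h; linarith [h]
  have hdiv : ((s/d)*Z)^2/Z = (s/d)^2*Z := by
    field_simp
  rw [hdiv, hZ]
  have hmu' : mu = s^2/d := by field_simp [hs]; exact hs.symm
  rw [hmu']
  field_simp
  ring

private lemma valEq (mu d r : ℝ) (hmu : 0 < mu) (hd0 : 0 < d) (hd : d < 1/2) :
    hObj mu d r (wstar mu d r) (zstar mu d r) = ((phiBar mu d r : ℝ) : EReal) := by
  have hs : Real.sqrt (mu*d)^2 = mu*d := Real.sq_sqrt (by positivity)
  have hs0 : 0 < Real.sqrt (mu*d) := Real.sqrt_pos.2 (by positivity)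
  have h12 : (0:ℝ) < 1-2*d := by linarith
  have hsd := sqrt_mudiv mu d hmu hd0
  have hdm := sqrt_dmu mu d hmu hd0
  set s := Real.sqrt (mu*d) with hsdef
  rcases le_or_gt |r| (2*s) with h1 | h1
  · rw [zstar, wstar, phiBar, if_pos h1, if_pos h1, if_pos h1, hObj, if_pos rfl, if_pos rfl]
    norm_num
  · rcases le_or_gt |r| (s/d) with h2 | h2
    · -- middle case
      have hr0 : r ≠ 0 := by
        intro h; rw [h, abs_zero] at h1; nlinarith
      have h2' : |r| ≤ Real.sqrt (mu/d) := by rw [hsd]; exact h2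
      have hZval : zstar mu d r = (|r| * (d/s) - 2*d)/(1-2*d) := by
        rw [zstar, if_neg (by rw [← hsdef]; exact not_le.2 h1), if_pos h2', hdm]
      have hZ0 : 0 < zstar mu d r := by
        rw [hZval]
        have : 0 < |r| * (d/s) - 2*d := by
          rw [sub_pos, ← sub_pos]
          have : d/s > 0 := by positivity
          calc (0:ℝ) < (|r| - 2*s)*(d/s) := by
                have : 0 < |r| - 2*s := by linarith
                positivity
            _ = |r| * (d/s) - 2*d := by field_simp
        positivity
      have hWval : wstar mu d r = Real.sign r * (s/d) * zstar mu d r := by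
        rw [wstar, if_neg (by rw [← hsdef]; exact not_le.2 h1), if_pos h2', hsd]
      rw [hObj, if_neg hZ0.ne']
      have hsig : (Real.sign r)^2 = 1 := sign_sq r hr0
      have hsr : Real.sign r * |r| = r := sgn_mul_abs r
      have hw2 : (wstar mu d r)^2 = ((s/d)*zstar mu d r)^2 := by
        rw [hWval, mul_pow, mul_pow, hsig, one_mul]; ring
      have hwr : (wstar mu d r - r)^2 = ((s/d)*zstar mu d r - |r|)^2 := by
        have h7 : Real.sign r * ((s/d)*zstar mu d r - |r|) = wstar mu d r - r := by
          rw [hWval, mul_sub, hsr]; ring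
        rw [← h7, mul_pow, hsig, one_mul]
      have hval : (1/2)*(wstar mu d r - r)^2 + mu*zstar mu d r
            + d*((wstar mu d r)^2/zstar mu d r - (wstar mu d r)^2)
          = (-(d*|r|^2) + 2*s*|r| - 2*mu*d)/(1-2*d) := by
        rw [hwr, hw2]
        exact midval mu d s (|r|) (zstar mu d r) hmu hd0 hd hs hs0 hZval hZ0.ne'
      rw [hval]
      congr 1
      rw [phiBar, if_neg (by rw [← hsdef]; exact not_le.2 h1), ← hsdef]
      rcases lt_or_eq_of_le h2 with h3 | h3
      · rw [if_pos (by rw [hsd]; exact h3), sq_abs]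
      · rw [if_neg (by rw [hsd]; exact not_lt.2 h3.ge)]
        rw [sq_abs, ← sq_abs r, h3]
        field_simp
        rw [div_eq_iff (by linarith), hs]; ring
    · -- outer case
      have h2' : ¬ |r| ≤ Real.sqrt (mu/d) := by rw [hsd]; exact not_le.2 h2
      have h1' : ¬ |r| ≤ 2*s := not_le.2 h1
      rw [zstar, wstar, if_neg (by rw [← hsdef]; exact h1'), if_neg h2',
        if_neg (by rw [← hsdef]; exact h1'), if_neg h2', hObj, if_neg one_ne_zero]
      rw [phiBar, if_neg (by rw [← hsdef]; exact h1'),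
        if_neg (by rw [hsd]; exact not_lt.2 h2.le)]
      norm_num

/-- (w*(r), z*(r)) attains the minimum of h over ℝ × [0,1],
and the attained value is φ̄(r; d). -/
theorem stmt_13 (mu d r : ℝ) (hmu : 0 < mu) (hd0 : 0 < d) (hd : d < 1/2) :
    (∀ w z : ℝ, 0 ≤ z → z ≤ 1 →
      hObj mu d r (wstar mu d r) (zstar mu d r) ≤ hObj mu d r w z) ∧
    hObj mu d r (wstar mu d r) (zstar mu d r) = ((phiBar mu d r : ℝ) : EReal) := by
  have hval := valEq mu d r hmu hd0 hd
  refine ⟨?_, hval⟩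
  intro w z hz0 hz1
  rw [hval]
  rcases eq_or_lt_of_le hz0 with h | h
  · by_cases hw : w = 0
    · rw [hObj, if_pos h.symm, if_pos hw]
      have := lb_zero mu d r hmu hd0 hd
      rw [hw]
      exact EReal.coe_le_coe_iff.2 this
    · rw [hObj, if_pos h.symm, if_neg hw]
      exact le_top
  · rw [hObj, if_neg h.ne']
    exact EReal.coe_le_coe_iff.2 (lb_pos mu d r hmu hd0 hd w z h hz1)
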